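/- (The Gaussian symbol is a Moyal idempotent.) Let ℏ > 0. Define Γ : ℝ² → ℝ by Γ(x, ξ) = 2 exp(−(x² + ξ²)/ℏ), and let σ : ℝ² × ℝ² → ℝ be the standard symplectic form σ((y₁,y₂),(z₁,z₂)) = y₁ z₂ − y₂ z₁. Then for every X ∈ ℝ²: (1/(πℏ))² ∫_{ℝ²} ∫_{ℝ²} Γ(X + Z) Γ(X + Y) exp((2i/ℏ) σ(Y, Z)) dY dZ = Γ(X). -/

import Mathlib

open MeasureTheory Complex

lemma gauss_general (h s : ℝ) (hh : 0 < h) (hs : 0 < s) (c d : ℂ) :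
    ∫ u : ℝ, Complex.exp (-(s : ℂ) / (h : ℂ) * u ^ 2 + c * u + d)
      = ((Real.sqrt (Real.pi * h / s) : ℝ) : ℂ) * Complex.exp (d + (h : ℂ) * c ^ 2 / (4 * s)) := by
  have hb : (-(s : ℂ) / (h : ℂ)).re < 0 := by
    have : (-(s : ℂ) / (h : ℂ)) = ((-(s / h) : ℝ) : ℂ) := by push_cast; ring
    rw [this, Complex.ofReal_re, neg_lt, neg_zero]
    positivity
  rw [integral_cexp_quadratic hb c d]
  congr 1
  · have h1 : ((Real.pi : ℂ) / -(-(s : ℂ) / (h : ℂ))) = ((Real.pi * h / s : ℝ) : ℂ) := by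
      push_cast
      field_simp
    rw [h1, Real.sqrt_eq_rpow, Complex.ofReal_cpow (by positivity)]
    norm_num
  · congr 1
    have hh' : (h : ℂ) ≠ 0 := by exact_mod_cast hh.ne'
    have hs' : (s : ℂ) ≠ 0 := by exact_mod_cast hs.ne'
    field_simp
    ring

lemma two_mul_mul (s x y : ℂ) : 2 * (s * x) * (s * y) = 2 * (s * s) * (x * y) := by ring



open MeasureTheory

/-- The standard symplectic form on `ℝ²`: `σ((y₁,y₂),(z₁,z₂)) = y₁ z₂ - y₂ z₁`. -/
def symplecticForm (Y Z : ℝ × ℝ) : ℝ := Y.1 * Z.2 - Y.2 * Z.1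

/-- The Gaussian symbol `Γ(x, ξ) = 2 exp(-(x² + ξ²)/ℏ)`. -/
noncomputable def gaussianSymbol (ℏ : ℝ) (x : ℝ × ℝ) : ℝ :=
  2 * Real.exp (-(x.1 ^ 2 + x.2 ^ 2) / ℏ)

/-- **The Gaussian symbol is a Moyal idempotent**: `Γ ♯_h Γ = Γ`. -/
theorem gaussianSymbol_moyal_idempotent (ℏ : ℝ) (hℏ : 0 < ℏ) :
    ∀ X : ℝ × ℝ,
      (((1 / (Real.pi * ℏ)) ^ 2 : ℝ) : ℂ) *
        ∫ Z : ℝ × ℝ, ∫ Y : ℝ × ℝ,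
          ((gaussianSymbol ℏ (X + Z) : ℝ) : ℂ) * ((gaussianSymbol ℏ (X + Y) : ℝ) : ℂ) *
            Complex.exp (2 * Complex.I / (ℏ : ℂ) * ((symplecticForm Y Z : ℝ) : ℂ))
      = ((gaussianSymbol ℏ X : ℝ) : ℂ) := by
  rintro ⟨a, b⟩
  have hh' : (ℏ : ℂ) ≠ 0 := by exact_mod_cast hℏ.ne'
  have g1 : ∀ c d : ℂ, (∫ u : ℝ, Complex.exp (-(1 : ℂ) / ℏ * u ^ 2 + c * u + d))
      = ((Real.sqrt (Real.pi * ℏ) : ℝ) : ℂ) * Complex.exp (d + (ℏ : ℂ) * c ^ 2 / 4) := by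
    intro c d
    have := gauss_general ℏ 1 hℏ one_pos c d
    norm_num at this
    convert this using 3 <;> norm_num
  have g2 : ∀ c d : ℂ, (∫ u : ℝ, Complex.exp (-(2 : ℂ) / ℏ * u ^ 2 + c * u + d))
      = ((Real.sqrt (Real.pi * ℏ / 2) : ℝ) : ℂ) * Complex.exp (d + (ℏ : ℂ) * c ^ 2 / 8) := by
    intro c d
    have := gauss_general ℏ 2 hℏ two_pos c d
    norm_num at this
    convert this using 3 <;> norm_num
  have key1 : ∀ Z : ℝ × ℝ,
      (∫ Y : ℝ × ℝ, ((gaussianSymbol ℏ ((a, b) + Y) : ℝ) : ℂ) *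
          Complex.exp (2 * Complex.I / (ℏ : ℂ) * ((symplecticForm Y Z : ℝ) : ℂ)))
      = ((2 * Real.pi * ℏ : ℝ) : ℂ) *
          Complex.exp (-(((Z.1 : ℂ)) ^ 2 + (Z.2 : ℂ) ^ 2) / ℏ
            + 2 * Complex.I / ℏ * ((b : ℂ) * Z.1 - (a : ℂ) * Z.2)) := by
    intro Z
    have hptwise : ∀ Y : ℝ × ℝ,
        ((gaussianSymbol ℏ ((a, b) + Y) : ℝ) : ℂ) *
          Complex.exp (2 * Complex.I / (ℏ : ℂ) * ((symplecticForm Y Z : ℝ) : ℂ))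
        = ((2 : ℂ) * Complex.exp (-(1 : ℂ) / ℏ * (Y.1 : ℂ) ^ 2
              + ((-2 * a + 2 * Complex.I * Z.2) / ℏ) * Y.1 + (-(a : ℂ) ^ 2 / ℏ)))
          * Complex.exp (-(1 : ℂ) / ℏ * (Y.2 : ℂ) ^ 2
              + ((-2 * b - 2 * Complex.I * Z.1) / ℏ) * Y.2 + (-(b : ℂ) ^ 2 / ℏ)) := by
      rintro ⟨y₁, y₂⟩
      simp only [gaussianSymbol, symplecticForm, Prod.fst_add, Prod.snd_add]
      push_cast
      rw [mul_assoc, mul_assoc, ← Complex.exp_add, ← Complex.exp_add]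
      congr 2
      field_simp
      ring
    simp only [hptwise]
    rw [MeasureTheory.Measure.volume_eq_prod,
      MeasureTheory.integral_prod_mul
        (f := fun u : ℝ => (2 : ℂ) * Complex.exp (-(1 : ℂ) / ℏ * (u : ℂ) ^ 2
          + ((-2 * a + 2 * Complex.I * Z.2) / ℏ) * u + (-(a : ℂ) ^ 2 / ℏ)))
        (g := fun u : ℝ => Complex.exp (-(1 : ℂ) / ℏ * (u : ℂ) ^ 2
          + ((-2 * b - 2 * Complex.I * Z.1) / ℏ) * u + (-(b : ℂ) ^ 2 / ℏ))),
      MeasureTheory.integral_const_mul, g1, g1, two_mul_mul, ← Complex.ofReal_mul,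
      Real.mul_self_sqrt (by positivity), ← Complex.exp_add]
    push_cast
    rw [show (2:ℂ) * ((Real.pi : ℂ) * ℏ) = 2 * Real.pi * ℏ by ring]
    congr 2
    field_simp
    linear_combination 4 * ((Z.1:ℂ)^2 + (Z.2:ℂ)^2) * Complex.I_sq
  simp only [mul_assoc, MeasureTheory.integral_const_mul]
  simp only [key1]
  have hpt2 : ∀ Z : ℝ × ℝ,
      ((gaussianSymbol ℏ ((a, b) + Z) : ℝ) : ℂ) *
        (((2 * Real.pi * ℏ : ℝ) : ℂ) *
          Complex.exp (-(((Z.1 : ℂ)) ^ 2 + (Z.2 : ℂ) ^ 2) / ℏ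
            + 2 * Complex.I / ℏ * ((b : ℂ) * Z.1 - (a : ℂ) * Z.2)))
      = ((2 * Real.pi * ℏ : ℝ) : ℂ) *
          (((2 : ℂ) * Complex.exp (-(2 : ℂ) / ℏ * (Z.1 : ℂ) ^ 2
              + ((-2 * a + 2 * Complex.I * b) / ℏ) * Z.1 + (-(a : ℂ) ^ 2 / ℏ)))
            * Complex.exp (-(2 : ℂ) / ℏ * (Z.2 : ℂ) ^ 2
              + ((-2 * b - 2 * Complex.I * a) / ℏ) * Z.2 + (-(b : ℂ) ^ 2 / ℏ))) := by
    rintro ⟨z₁, z₂⟩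
    simp only [gaussianSymbol, Prod.fst_add, Prod.snd_add]
    push_cast
    rw [show ∀ x y u : ℂ, 2 * Complex.exp x * (y * Complex.exp u)
        = y * (2 * Complex.exp (x + u)) from fun x y u => by rw [Complex.exp_add]; ring]
    congr 1
    rw [mul_assoc, ← Complex.exp_add]
    congr 2
    field_simp
    ring
  simp only [hpt2, MeasureTheory.integral_const_mul]
  rw [MeasureTheory.Measure.volume_eq_prod,
    MeasureTheory.integral_prod_mul
      (f := fun u : ℝ => (2 : ℂ) * Complex.exp (-(2 : ℂ) / ℏ * (u : ℂ) ^ 2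
        + ((-2 * a + 2 * Complex.I * b) / ℏ) * u + (-(a : ℂ) ^ 2 / ℏ)))
      (g := fun u : ℝ => Complex.exp (-(2 : ℂ) / ℏ * (u : ℂ) ^ 2
        + ((-2 * b - 2 * Complex.I * a) / ℏ) * u + (-(b : ℂ) ^ 2 / ℏ))),
    MeasureTheory.integral_const_mul, g2, g2, two_mul_mul, ← Complex.ofReal_mul,
    Real.mul_self_sqrt (by positivity), ← Complex.exp_add]
  simp only [gaussianSymbol]
  push_cast
  rw [show (-(a:ℂ) ^ 2 / ℏ + ℏ * ((-2 * a + 2 * Complex.I * b) / ℏ) ^ 2 / 8)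
      + (-(b:ℂ) ^ 2 / ℏ + ℏ * ((-2 * b - 2 * Complex.I * a) / ℏ) ^ 2 / 8)
      = -((a:ℂ) ^ 2 + (b:ℂ) ^ 2) / ℏ by
    field_simp
    linear_combination 4 * ((a:ℂ)^2 + (b:ℂ)^2) * Complex.I_sq]
  have hπ : (Real.pi : ℂ) ≠ 0 := by exact_mod_cast Real.pi_ne_zero
  field_simp
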